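/- Fix integers k ≥ 2 and a squarefree integer δ coprime to A. Suppose for all primes p ∤ A we have p > k. Let λ be supported on squarefree integers coprime to A, and define y_r = μ(r) f_1(r) Σ' λ_{dr}/f(dr) where f(d) = ∏_{p|d} p/k and f_1(d) = ∏_{p|d}(p-k)/k, with Σ' over squarefree d coprime to A and r. Then T_δ := Σ'_{d,e} λ_d λ_e / f([d,e,δ]/δ) = Σ'_{a, (a,δ)=1} μ²(a)/f_1(a) · (Σ_{s|δ} μ(s) y_{as})², where [d,e,δ] denotes the least common multiple. -/

import Mathlib

open scoped Classical
open Finset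

private lemma prodPF_mul (g : ℕ → ℝ) {m n : ℕ} (h : Nat.Coprime m n) (hm : m ≠ 0) (hn : n ≠ 0) :
    ∏ p ∈ (m * n).primeFactors, g p
      = (∏ p ∈ m.primeFactors, g p) * ∏ p ∈ n.primeFactors, g p := by
  rw [Nat.primeFactors_mul hm hn, Finset.prod_union h.disjoint_primeFactors]

private lemma sum_divisors_prodPF (g : ℕ → ℝ) {n : ℕ} (hn : Squarefree n) :
    ∑ a ∈ n.divisors, ∏ p ∈ a.primeFactors, g p = ∏ p ∈ n.primeFactors, (g p + 1) := by
  rw [Finset.prod_add]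
  simp only [Finset.prod_const_one, mul_one]
  refine Finset.sum_nbij' (fun a => a.primeFactors) (fun t => ∏ p ∈ t, p) ?_ ?_ ?_ ?_ ?_
  · intro a ha
    rw [Nat.mem_divisors] at ha
    exact Finset.mem_powerset.2 (Nat.primeFactors_mono ha.1 ha.2)
  · intro t ht
    rw [Finset.mem_powerset] at ht
    rw [Nat.mem_divisors]
    refine ⟨?_, hn.ne_zero⟩
    calc (∏ p ∈ t, p) ∣ ∏ p ∈ n.primeFactors, p :=
          Finset.prod_dvd_prod_of_subset _ _ _ ht
      _ = n := Nat.prod_primeFactors_of_squarefree hn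
  · intro a ha
    rw [Nat.mem_divisors] at ha
    exact Nat.prod_primeFactors_of_squarefree (hn.squarefree_of_dvd ha.1)
  · intro t ht
    rw [Finset.mem_powerset] at ht
    exact Nat.primeFactors_prod (fun p hp => Nat.prime_of_mem_primeFactors (ht hp))
  · intro a _; rfl

private lemma primeFactors_div_gcd {n δ : ℕ} (hn : Squarefree n) (hδ : δ ≠ 0) :
    (n / Nat.gcd n δ).primeFactors = n.primeFactors \ δ.primeFactors := by
  have hg : Nat.gcd n δ ∣ n := Nat.gcd_dvd_left n δ
  have hco := Nat.coprime_div_gcd_of_squarefree hn hδ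
  have h0 : n ≠ 0 := hn.ne_zero
  have hmul : n / Nat.gcd n δ * Nat.gcd n δ = n := Nat.div_mul_cancel hg
  have hd0 : n / Nat.gcd n δ ≠ 0 := by
    intro h; rw [h, zero_mul] at hmul; exact h0 hmul.symm
  ext p
  simp only [Finset.mem_sdiff, Nat.mem_primeFactors, ne_eq]
  constructor
  · rintro ⟨hp, hpd, -⟩
    refine ⟨⟨hp, hpd.trans (Nat.div_dvd_of_dvd hg), h0⟩, ?_⟩
    rintro ⟨-, hpδ, -⟩
    have h2 : p ∣ 1 := hco.gcd_eq_one ▸ Nat.dvd_gcd hpd hpδ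
    exact hp.one_lt.ne' (Nat.eq_one_of_dvd_one h2)
  · rintro ⟨⟨hp, hpn, -⟩, hnot⟩
    refine ⟨hp, ?_, hd0⟩
    have hpδ : ¬ p ∣ δ := fun h => hnot ⟨hp, h, hδ⟩
    have hcop : Nat.Coprime p (Nat.gcd n δ) :=
      Nat.Coprime.coprime_dvd_right (Nat.gcd_dvd_right n δ)
        ((Nat.Prime.coprime_iff_not_dvd hp).2 hpδ)
    exact hcop.dvd_of_dvd_mul_right (show p ∣ n / Nat.gcd n δ * Nat.gcd n δ by rw [hmul]; exact hpn)

private lemma dvd_div_gcd_iff {n δ a : ℕ} (hn : Squarefree n) (hδ : δ ≠ 0) :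
    a ∣ n / Nat.gcd n δ ↔ a ∣ n ∧ Nat.Coprime a δ := by
  have hg : Nat.gcd n δ ∣ n := Nat.gcd_dvd_left n δ
  have hco := Nat.coprime_div_gcd_of_squarefree hn hδ
  have hmul : n / Nat.gcd n δ * Nat.gcd n δ = n := Nat.div_mul_cancel hg
  constructor
  · intro h
    exact ⟨h.trans (Nat.div_dvd_of_dvd hg), Nat.Coprime.coprime_dvd_left h hco⟩
  · rintro ⟨h1, h2⟩
    have hcop : Nat.Coprime a (Nat.gcd n δ) :=
      Nat.Coprime.coprime_dvd_right (Nat.gcd_dvd_right n δ) h2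
    exact hcop.dvd_of_dvd_mul_right (show a ∣ n / Nat.gcd n δ * Nat.gcd n δ by rw [hmul]; exact h1)

private lemma divisors_filter_dvd {δ n : ℕ} (hδ : δ ≠ 0) :
    δ.divisors.filter (· ∣ n) = (Nat.gcd δ n).divisors := by
  ext s
  simp only [Finset.mem_filter, Nat.mem_divisors, Nat.dvd_gcd_iff]
  have : Nat.gcd δ n ≠ 0 := Nat.gcd_ne_zero_left hδ
  tauto

private lemma lcm_div_eq {L δ : ℕ} (hδ : δ ≠ 0) (hL : L ≠ 0) :
    Nat.lcm L δ / δ = L / Nat.gcd L δ := by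
  have h1 : Nat.gcd L δ * Nat.lcm L δ = L * δ := Nat.gcd_mul_lcm L δ
  have hg : Nat.gcd L δ ∣ L := Nat.gcd_dvd_left L δ
  have hg0 : Nat.gcd L δ ≠ 0 := Nat.gcd_ne_zero_right hδ
  have key : Nat.lcm L δ = L / Nat.gcd L δ * δ :=
    Nat.eq_of_mul_eq_mul_left (Nat.pos_of_ne_zero hg0)
      (by rw [h1, ← Nat.mul_assoc, Nat.mul_div_cancel' hg])
  rw [key, Nat.mul_div_cancel _ (Nat.pos_of_ne_zero hδ)]

private lemma squarefree_lcm {a b : ℕ} (ha : Squarefree a) (hb : Squarefree b) :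
    Squarefree (Nat.lcm a b) := by
  have h0 : Nat.lcm a b ≠ 0 := Nat.lcm_ne_zero ha.ne_zero hb.ne_zero
  refine Nat.squarefree_of_factorization_le_one h0 (fun p => ?_)
  rw [Nat.factorization_lcm ha.ne_zero hb.ne_zero]
  exact sup_le (ha.natFactorization_le_one p) (hb.natFactorization_le_one p)

private lemma primeFactors_lcm {a b : ℕ} (ha : a ≠ 0) (hb : b ≠ 0) :
    (Nat.lcm a b).primeFactors = a.primeFactors ∪ b.primeFactors := by
  ext p
  simp only [Nat.mem_primeFactors, Finset.mem_union, ne_eq]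
  constructor
  · rintro ⟨hp, hd, -⟩
    rcases (Nat.Prime.dvd_mul hp).1 (hd.trans (Nat.lcm_dvd_mul a b)) with h | h
    · exact Or.inl ⟨hp, h, ha⟩
    · exact Or.inr ⟨hp, h, hb⟩

  · rintro (⟨hp, h, -⟩ | ⟨hp, h, -⟩)
    · exact ⟨hp, h.trans (Nat.dvd_lcm_left a b), Nat.lcm_ne_zero ha hb⟩
    · exact ⟨hp, h.trans (Nat.dvd_lcm_right a b), Nat.lcm_ne_zero ha hb⟩

private lemma key_partition (g : ℕ → ℝ) (D E Δ : Finset ℕ) :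
    (∏ p ∈ D, g p) * ∏ p ∈ E, g p =
      (∏ p ∈ (D ∪ E) \ Δ, g p) *
        ((∏ p ∈ D ∩ Δ, g p) * (∏ p ∈ E ∩ Δ, g p) * ∏ p ∈ (D ∩ E) \ Δ, g p) := by
  classical
  have h : ∀ S : Finset ℕ, S ⊆ D ∪ E →
      ∏ p ∈ S, g p = ∏ p ∈ D ∪ E, (if p ∈ S then g p else 1) := by
    intro S hS
    rw [Finset.prod_ite_mem, Finset.inter_eq_right.mpr hS]
  rw [h D Finset.subset_union_left, h E Finset.subset_union_right,
    h ((D ∪ E) \ Δ) Finset.sdiff_subset,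
    h (D ∩ Δ) (Finset.inter_subset_left.trans Finset.subset_union_left),
    h (E ∩ Δ) (Finset.inter_subset_left.trans Finset.subset_union_right),
    h ((D ∩ E) \ Δ) (Finset.sdiff_subset.trans
      (Finset.inter_subset_left.trans Finset.subset_union_left)),
    ← Finset.prod_mul_distrib, ← Finset.prod_mul_distrib, ← Finset.prod_mul_distrib,
    ← Finset.prod_mul_distrib]
  refine Finset.prod_congr rfl (fun p _ => ?_)
  by_cases h1 : p ∈ D <;> by_cases h2 : p ∈ E <;> by_cases h3 : p ∈ Δ <;>
    simp [h1, h2, h3, Finset.mem_union, Finset.mem_inter, Finset.mem_sdiff] <;> ring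

private lemma selberg_coeff (k : ℕ) {d e δ : ℕ} (hd : Squarefree d) (he : Squarefree e)
    (hδ : Squarefree δ) :
    (∏ p ∈ d.primeFactors, ((p : ℝ) / k)) * ∏ p ∈ e.primeFactors, ((p : ℝ) / k) =
      (∏ p ∈ (Nat.lcm (Nat.lcm d e) δ / δ).primeFactors, ((p : ℝ) / k)) *
        ((∏ p ∈ (Nat.gcd d δ).primeFactors, ((p : ℝ) / k)) *
          (∏ p ∈ (Nat.gcd e δ).primeFactors, ((p : ℝ) / k)) *
          ∏ p ∈ (Nat.gcd d e / Nat.gcd (Nat.gcd d e) δ).primeFactors, ((p : ℝ) / k)) := by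
  have hL : Squarefree (Nat.lcm d e) := squarefree_lcm hd he
  have h1 : Nat.lcm (Nat.lcm d e) δ / δ = Nat.lcm d e / Nat.gcd (Nat.lcm d e) δ :=
    lcm_div_eq hδ.ne_zero hL.ne_zero
  have h2 : (Nat.lcm d e / Nat.gcd (Nat.lcm d e) δ).primeFactors
      = (d.primeFactors ∪ e.primeFactors) \ δ.primeFactors := by
    rw [primeFactors_div_gcd hL hδ.ne_zero, primeFactors_lcm hd.ne_zero he.ne_zero]
  have h3 : (Nat.gcd d e / Nat.gcd (Nat.gcd d e) δ).primeFactors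
      = (d.primeFactors ∩ e.primeFactors) \ δ.primeFactors := by
    rw [primeFactors_div_gcd (hd.squarefree_of_dvd (Nat.gcd_dvd_left d e)) hδ.ne_zero,
      Nat.primeFactors_gcd hd.ne_zero he.ne_zero]
  rw [h1, h2, h3, Nat.primeFactors_gcd hd.ne_zero hδ.ne_zero,
    Nat.primeFactors_gcd he.ne_zero hδ.ne_zero]
  exact key_partition _ _ _ _

private lemma prodPF_pos {k A : ℕ} (hk : 2 ≤ k)
    (hkp : ∀ p : ℕ, p.Prime → ¬ p ∣ A → k < p) {n : ℕ} (hnA : Nat.Coprime n A) :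
    0 < ∏ p ∈ n.primeFactors, ((p : ℝ) / k) := by
  have hk0 : (0 : ℝ) < k := by positivity
  refine Finset.prod_pos (fun p hp => ?_)
  have hp' := Nat.prime_of_mem_primeFactors hp
  exact div_pos (by exact_mod_cast hp'.pos) hk0

private lemma prodPF1_pos {k A : ℕ} (hk : 2 ≤ k)
    (hkp : ∀ p : ℕ, p.Prime → ¬ p ∣ A → k < p) {n : ℕ} (hnA : Nat.Coprime n A) :
    0 < ∏ p ∈ n.primeFactors, (((p : ℝ) - k) / k) := by
  have hk0 : (0 : ℝ) < k := by positivity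
  refine Finset.prod_pos (fun p hp => ?_)
  have hp' := Nat.prime_of_mem_primeFactors hp
  have hpd := Nat.dvd_of_mem_primeFactors hp
  have hpA : ¬ p ∣ A := by
    intro h
    have : p ∣ 1 := hnA ▸ Nat.dvd_gcd hpd h
    exact hp'.one_lt.ne' (Nat.eq_one_of_dvd_one this)
  have := hkp p hp' hpA
  have : (k : ℝ) < p := by exact_mod_cast this
  exact div_pos (by linarith) hk0

theorem selberg_diagonalization (k A R₂ δ : ℕ) (hk : 2 ≤ k)
    (hδ : Squarefree δ) (hδA : Nat.Coprime δ A)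
    (hkp : ∀ p : ℕ, p.Prime → ¬ p ∣ A → k < p)
    (lam : ℕ → ℝ)
    (hsupp : ∀ d : ℕ, lam d ≠ 0 → Squarefree d ∧ Nat.Coprime d A ∧ d < R₂)
    (f f₁ : ℕ → ℝ)
    (hf : ∀ d : ℕ, f d = ∏ p ∈ d.primeFactors, ((p : ℝ) / k))
    (hf₁ : ∀ d : ℕ, f₁ d = ∏ p ∈ d.primeFactors, (((p : ℝ) - k) / k))
    (y : ℕ → ℝ)
    (hy : ∀ r : ℕ, y r =
      ((ArithmeticFunction.moebius r : ℤ) : ℝ) * f₁ r *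
        ∑ d ∈ (Finset.range R₂).filter
            (fun d => Squarefree d ∧ Nat.Coprime d A ∧ Nat.Coprime d r),
          lam (d * r) / f (d * r)) :
    ∑ d ∈ (Finset.range R₂).filter (fun d => Squarefree d ∧ Nat.Coprime d A),
      ∑ e ∈ (Finset.range R₂).filter (fun e => Squarefree e ∧ Nat.Coprime e A),
        lam d * lam e / f (Nat.lcm (Nat.lcm d e) δ / δ)
      = ∑ a ∈ (Finset.range R₂).filter
            (fun a => Squarefree a ∧ Nat.Coprime a A ∧ Nat.Coprime a δ),
          ((ArithmeticFunction.moebius a : ℤ) : ℝ) ^ 2 / f₁ a *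
            (∑ s ∈ δ.divisors, ((ArithmeticFunction.moebius s : ℤ) : ℝ) * y (a * s)) ^ 2 := by
  classical
  have hδ0 : δ ≠ 0 := hδ.ne_zero
  have hk0 : (k : ℝ) ≠ 0 := by positivity
  set D : Finset ℕ := (Finset.range R₂).filter (fun d => Squarefree d ∧ Nat.Coprime d A)
    with hDdef
  set Aset : Finset ℕ := (Finset.range R₂).filter
    (fun a => Squarefree a ∧ Nat.Coprime a A ∧ Nat.Coprime a δ) with hAdef
  set u : ℕ → ℝ := fun n => lam n / f n * f (Nat.gcd δ n) with hu
  set Z : ℕ → ℝ := fun m => ∑ n ∈ D.filter (fun n => m ∣ n), lam n / f n with hZ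
  have hfpos : ∀ n : ℕ, Nat.Coprime n A → 0 < f n := fun n hn => by
    rw [hf n]; exact prodPF_pos hk hkp hn
  have hf₁pos : ∀ n : ℕ, Nat.Coprime n A → 0 < f₁ n := fun n hn => by
    rw [hf₁ n]; exact prodPF1_pos hk hkp hn
  have hsumdiv : ∀ m : ℕ, Squarefree m → (∑ s ∈ m.divisors, f₁ s) = f m := by
    intro m hm
    calc ∑ s ∈ m.divisors, f₁ s
        = ∑ s ∈ m.divisors, ∏ p ∈ s.primeFactors, (((p : ℝ) - k) / k) :=
          Finset.sum_congr rfl (fun s _ => hf₁ s)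
      _ = ∏ p ∈ m.primeFactors, ((((p : ℝ) - k) / k) + 1) := sum_divisors_prodPF _ hm
      _ = ∏ p ∈ m.primeFactors, ((p : ℝ) / k) :=
          Finset.prod_congr rfl (fun p _ => by field_simp; ring)
      _ = f m := (hf m).symm
  -- substitution lemma for y
  have hy' : ∀ m : ℕ, Squarefree m → Nat.Coprime m A →
      y m = ((ArithmeticFunction.moebius m : ℤ) : ℝ) * f₁ m * Z m := by
    intro m hm hmA
    have hm0 : 0 < m := Nat.pos_of_ne_zero hm.ne_zero
    have hsum : (∑ d ∈ (Finset.range R₂).filter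
        (fun d => Squarefree d ∧ Nat.Coprime d A ∧ Nat.Coprime d m),
        lam (d * m) / f (d * m)) = Z m := by
      have e1 := Finset.sum_filter_of_ne
        (s := (Finset.range R₂).filter
          (fun d => Squarefree d ∧ Nat.Coprime d A ∧ Nat.Coprime d m))
        (f := fun d => lam (d * m) / f (d * m))
        (p := fun d => lam (d * m) ≠ 0)
        (fun x _ hx h => hx (by simp only [h, zero_div]))
      have e2 := Finset.sum_filter_of_ne
        (s := D.filter (fun n => m ∣ n))
        (f := fun n => lam n / f n)
        (p := fun n => lam n ≠ 0)
        (fun x _ hx h => hx (by simp only [h, zero_div]))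
      rw [hZ]
      refine e1.symm.trans (Eq.trans ?_ e2)
      refine Finset.sum_nbij' (fun d => d * m) (fun n => n / m) ?_ ?_ ?_ ?_ ?_
      · intro d hd
        simp only [Finset.mem_filter, Finset.mem_range] at hd
        obtain ⟨⟨hdR, hdsq, hdA, hdm⟩, hlam⟩ := hd
        obtain ⟨hsq, hA, hR⟩ := hsupp _ hlam
        simp only [Finset.mem_filter, Finset.mem_range, hDdef]
        exact ⟨⟨⟨hR, hsq, hA⟩, dvd_mul_left m d⟩, hlam⟩
      · intro n hn
        simp only [Finset.mem_filter, Finset.mem_range, hDdef] at hn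
        obtain ⟨⟨⟨hnR, hnsq, hnA⟩, hmn⟩, hlam⟩ := hn
        simp only [Finset.mem_filter, Finset.mem_range]
        have hnm : n / m * m = n := Nat.div_mul_cancel hmn
        have hdvd : n / m ∣ n := Nat.div_dvd_of_dvd hmn
        refine ⟨⟨lt_of_le_of_lt (Nat.div_le_self n m) hnR,
          hnsq.squarefree_of_dvd hdvd, Nat.Coprime.coprime_dvd_left hdvd hnA, ?_⟩, ?_⟩
        · exact Nat.coprime_of_squarefree_mul (by rw [hnm]; exact hnsq)
        · rw [hnm]; exact hlam
      · intro d _; show d * m / m = d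
        rw [Nat.mul_comm]
        exact Nat.mul_div_cancel_left d hm0
      · intro n hn
        simp only [Finset.mem_filter, Finset.mem_range, hDdef] at hn
        exact Nat.div_mul_cancel hn.1.2
      · intro d _; rfl
    rw [hy m, hsum]
  -- membership helpers
  have hmemD : ∀ d ∈ D, Squarefree d ∧ Nat.Coprime d A ∧ d < R₂ := by
    intro d hd
    simp only [hDdef, Finset.mem_filter, Finset.mem_range] at hd
    exact ⟨hd.2.1, hd.2.2, hd.1⟩
  have hmemA : ∀ a ∈ Aset, Squarefree a ∧ Nat.Coprime a A ∧ Nat.Coprime a δ ∧ a < R₂ := by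
    intro a ha
    simp only [hAdef, Finset.mem_filter, Finset.mem_range] at ha
    exact ⟨ha.2.1, ha.2.2.1, ha.2.2.2, ha.1⟩
  -- LHS = M
  have hLHS : (∑ d ∈ D, ∑ e ∈ D, lam d * lam e / f (Nat.lcm (Nat.lcm d e) δ / δ))
      = ∑ d ∈ D, ∑ e ∈ D, u d * u e * f (Nat.gcd d e / Nat.gcd (Nat.gcd d e) δ) := by
    refine Finset.sum_congr rfl (fun d hd => Finset.sum_congr rfl (fun e he => ?_))
    obtain ⟨hds, hdA, hdR⟩ := hmemD d hd
    obtain ⟨hes, heA, heR⟩ := hmemD e he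
    have hG'dvd : Nat.gcd d e / Nat.gcd (Nat.gcd d e) δ ∣ d :=
      (Nat.div_dvd_of_dvd (Nat.gcd_dvd_left (Nat.gcd d e) δ)).trans (Nat.gcd_dvd_left d e)
    have hG'A : Nat.Coprime (Nat.gcd d e / Nat.gcd (Nat.gcd d e) δ) A :=
      Nat.Coprime.coprime_dvd_left hG'dvd hdA
    have hargA : Nat.Coprime (Nat.lcm (Nat.lcm d e) δ / δ) A := by
      have h1 : Nat.lcm (Nat.lcm d e) δ / δ ∣ Nat.lcm (Nat.lcm d e) δ :=
        Nat.div_dvd_of_dvd (Nat.dvd_lcm_right _ _)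
      have h2 : Nat.lcm (Nat.lcm d e) δ ∣ Nat.lcm d e * δ := Nat.lcm_dvd_mul _ _
      have h3 : Nat.lcm d e ∣ d * e := Nat.lcm_dvd_mul d e
      have h5 : Nat.Coprime (Nat.lcm d e) A :=
        Nat.Coprime.coprime_dvd_left h3 (Nat.Coprime.mul hdA heA)
      exact Nat.Coprime.coprime_dvd_left (h1.trans h2) (Nat.Coprime.mul h5 hδA)
    have key : f d * f e = f (Nat.lcm (Nat.lcm d e) δ / δ) *
        (f (Nat.gcd d δ) * f (Nat.gcd e δ) *
          f (Nat.gcd d e / Nat.gcd (Nat.gcd d e) δ)) := by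
      rw [hf d, hf e, hf (Nat.lcm (Nat.lcm d e) δ / δ), hf (Nat.gcd d δ), hf (Nat.gcd e δ),
        hf (Nat.gcd d e / Nat.gcd (Nat.gcd d e) δ)]
      exact selberg_coeff k hds hes hδ
    have p1 := hfpos d hdA
    have p2 := hfpos e heA
    have p3 := hfpos _ hargA
    have p4 := hfpos _ (Nat.Coprime.coprime_dvd_left (Nat.gcd_dvd_left d δ) hdA)
    have p5 := hfpos _ (Nat.Coprime.coprime_dvd_left (Nat.gcd_dvd_left e δ) heA)
    have p6 := hfpos _ hG'A
    simp only [hu]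
    rw [Nat.gcd_comm δ d, Nat.gcd_comm δ e]
    field_simp
    linear_combination (lam d * lam e) * key
  -- per-a reduction
  have hstep1 : ∀ a ∈ Aset,
      ((ArithmeticFunction.moebius a : ℤ) : ℝ) ^ 2 / f₁ a *
        (∑ s ∈ δ.divisors, ((ArithmeticFunction.moebius s : ℤ) : ℝ) * y (a * s)) ^ 2
      = f₁ a * (∑ n ∈ D, if a ∣ n then u n else 0) ^ 2 := by
    intro a ha
    obtain ⟨has, haA, haδ, haR⟩ := hmemA a ha
    have ha0 : a ≠ 0 := has.ne_zero
    have inner : (∑ s ∈ δ.divisors, ((ArithmeticFunction.moebius s : ℤ) : ℝ) * y (a * s))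
        = ((ArithmeticFunction.moebius a : ℤ) : ℝ) * f₁ a *
          (∑ n ∈ D, if a ∣ n then u n else 0) := by
      have stepA : (∑ s ∈ δ.divisors, ((ArithmeticFunction.moebius s : ℤ) : ℝ) * y (a * s))
          = ∑ s ∈ δ.divisors, ((ArithmeticFunction.moebius a : ℤ) : ℝ) * f₁ a *
              (f₁ s * Z (a * s)) := by
        refine Finset.sum_congr rfl (fun s hs => ?_)
        have hsδ : s ∣ δ := (Nat.mem_divisors.1 hs).1
        have hss : Squarefree s := hδ.squarefree_of_dvd hsδ
        have hs0 : s ≠ 0 := hss.ne_zero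
        have hcop : Nat.Coprime a s := Nat.Coprime.coprime_dvd_right hsδ haδ
        have hassq : Squarefree (a * s) := Nat.squarefree_mul_iff.2 ⟨hcop, has, hss⟩
        have hasA : Nat.Coprime (a * s) A :=
          Nat.Coprime.mul haA (Nat.Coprime.coprime_dvd_left hsδ hδA)
        rw [hy' (a * s) hassq hasA]
        have hmob : ((ArithmeticFunction.moebius (a * s) : ℤ) : ℝ)
            = ((ArithmeticFunction.moebius a : ℤ) : ℝ) *
              ((ArithmeticFunction.moebius s : ℤ) : ℝ) := by
          rw [← Int.cast_mul]
          congr 1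
          exact ArithmeticFunction.isMultiplicative_moebius.map_mul_of_coprime hcop
        have hf₁mul : f₁ (a * s) = f₁ a * f₁ s := by
          rw [hf₁ (a * s), hf₁ a, hf₁ s]
          exact prodPF_mul _ hcop ha0 hs0
        have hμs2 : ((ArithmeticFunction.moebius s : ℤ) : ℝ) ^ 2 = 1 := by
          have := ArithmeticFunction.moebius_sq_eq_one_of_squarefree hss
          exact_mod_cast congrArg (fun z : ℤ => (z : ℝ)) this
        rw [hmob, hf₁mul]
        linear_combination (((ArithmeticFunction.moebius a : ℤ) : ℝ) * f₁ a * f₁ s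
          * Z (a * s)) * hμs2
      rw [stepA, ← Finset.mul_sum]
      congr 1
      have stepB : ∀ s ∈ δ.divisors, f₁ s * Z (a * s)
          = ∑ n ∈ D, (if a * s ∣ n then f₁ s * (lam n / f n) else 0) := by
        intro s _
        simp only [hZ]
        rw [Finset.mul_sum, Finset.sum_filter]
      calc (∑ s ∈ δ.divisors, f₁ s * Z (a * s))
          = ∑ s ∈ δ.divisors, ∑ n ∈ D, (if a * s ∣ n then f₁ s * (lam n / f n) else 0) :=
            Finset.sum_congr rfl stepB
        _ = ∑ n ∈ D, ∑ s ∈ δ.divisors, (if a * s ∣ n then f₁ s * (lam n / f n) else 0) :=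
            Finset.sum_comm
        _ = ∑ n ∈ D, (if a ∣ n then u n else 0) := by
            refine Finset.sum_congr rfl (fun n hn => ?_)
            by_cases han : a ∣ n
            · simp only [han, if_true]
              have hrw : ∀ s ∈ δ.divisors, (if a * s ∣ n then f₁ s * (lam n / f n) else 0)
                  = (if s ∣ n then f₁ s * (lam n / f n) else 0) := by
                intro s hs
                have hsδ : s ∣ δ := (Nat.mem_divisors.1 hs).1
                have hcop : Nat.Coprime a s := Nat.Coprime.coprime_dvd_right hsδ haδ
                have hiff : a * s ∣ n ↔ s ∣ n :=
                  ⟨fun h => (dvd_mul_left s a).trans h,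
                    fun h => Nat.Coprime.mul_dvd_of_dvd_of_dvd hcop han h⟩
                simp only [hiff]
              rw [Finset.sum_congr rfl hrw, ← Finset.sum_filter, divisors_filter_dvd hδ0,
                ← Finset.sum_mul, hsumdiv _ (hδ.squarefree_of_dvd (Nat.gcd_dvd_left δ n))]
              simp only [hu]
              ring
            · simp only [han, if_false]
              refine Finset.sum_eq_zero (fun s hs => ?_)
              have hns : ¬ a * s ∣ n := fun h => han ((dvd_mul_right a s).trans h)
              simp [hns]
    rw [inner]
    have hμa2 : ((ArithmeticFunction.moebius a : ℤ) : ℝ) ^ 2 = 1 := by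
      have := ArithmeticFunction.moebius_sq_eq_one_of_squarefree has
      exact_mod_cast congrArg (fun z : ℤ => (z : ℝ)) this
    have hf₁a : f₁ a ≠ 0 := (hf₁pos a haA).ne'
    rw [mul_pow, mul_pow, hμa2, one_mul]
    field_simp
  -- RHS = M
  have hRHS : (∑ a ∈ Aset, ((ArithmeticFunction.moebius a : ℤ) : ℝ) ^ 2 / f₁ a *
        (∑ s ∈ δ.divisors, ((ArithmeticFunction.moebius s : ℤ) : ℝ) * y (a * s)) ^ 2)
      = ∑ d ∈ D, ∑ e ∈ D, u d * u e * f (Nat.gcd d e / Nat.gcd (Nat.gcd d e) δ) := by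
    calc (∑ a ∈ Aset, ((ArithmeticFunction.moebius a : ℤ) : ℝ) ^ 2 / f₁ a *
          (∑ s ∈ δ.divisors, ((ArithmeticFunction.moebius s : ℤ) : ℝ) * y (a * s)) ^ 2)
        = ∑ a ∈ Aset, f₁ a * (∑ n ∈ D, if a ∣ n then u n else 0) ^ 2 :=
          Finset.sum_congr rfl hstep1
      _ = ∑ a ∈ Aset, ∑ d ∈ D, ∑ e ∈ D,
            f₁ a * ((if a ∣ d then u d else 0) * (if a ∣ e then u e else 0)) := by
          refine Finset.sum_congr rfl (fun a _ => ?_)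
          rw [sq, Finset.sum_mul_sum, Finset.mul_sum]
          exact Finset.sum_congr rfl (fun d _ => by rw [Finset.mul_sum])
      _ = ∑ d ∈ D, ∑ a ∈ Aset, ∑ e ∈ D,
            f₁ a * ((if a ∣ d then u d else 0) * (if a ∣ e then u e else 0)) :=
          Finset.sum_comm
      _ = ∑ d ∈ D, ∑ e ∈ D, ∑ a ∈ Aset,
            f₁ a * ((if a ∣ d then u d else 0) * (if a ∣ e then u e else 0)) :=
          Finset.sum_congr rfl (fun d _ => Finset.sum_comm)
      _ = ∑ d ∈ D, ∑ e ∈ D, u d * u e * f (Nat.gcd d e / Nat.gcd (Nat.gcd d e) δ) := by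
          refine Finset.sum_congr rfl (fun d hd => Finset.sum_congr rfl (fun e he => ?_))
          obtain ⟨hds, hdA, hdR⟩ := hmemD d hd
          obtain ⟨hes, heA, heR⟩ := hmemD e he
          have hG : Squarefree (Nat.gcd d e) := hds.squarefree_of_dvd (Nat.gcd_dvd_left d e)
          have combine : ∀ a ∈ Aset,
              f₁ a * ((if a ∣ d then u d else 0) * (if a ∣ e then u e else 0))
              = u d * u e * (if a ∣ d ∧ a ∣ e then f₁ a else 0) := by
            intro a _
            by_cases h1 : a ∣ d <;> by_cases h2 : a ∣ e <;> simp [h1, h2] <;> ring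
          rw [Finset.sum_congr rfl combine, ← Finset.mul_sum, ← Finset.sum_filter]
          congr 1
          have hG'0 : Nat.gcd d e / Nat.gcd (Nat.gcd d e) δ ≠ 0 := by
            have hgg : Nat.gcd (Nat.gcd d e) δ ∣ Nat.gcd d e := Nat.gcd_dvd_left _ _
            have hcan := Nat.div_mul_cancel hgg
            intro h
            rw [h, zero_mul] at hcan
            exact hG.ne_zero hcan.symm
          have hfilter : Aset.filter (fun a => a ∣ d ∧ a ∣ e)
              = (Nat.gcd d e / Nat.gcd (Nat.gcd d e) δ).divisors := by
            ext a
            simp only [hAdef, Finset.mem_filter, Finset.mem_range, Nat.mem_divisors]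
            constructor
            · rintro ⟨⟨haR, hasq, haA, haδ⟩, had, hae⟩
              exact ⟨(dvd_div_gcd_iff hG hδ0).2 ⟨Nat.dvd_gcd had hae, haδ⟩, hG'0⟩
            · rintro ⟨hdvd, -⟩
              obtain ⟨haG, haδ⟩ := (dvd_div_gcd_iff hG hδ0).1 hdvd
              have had : a ∣ d := haG.trans (Nat.gcd_dvd_left d e)
              have hae : a ∣ e := haG.trans (Nat.gcd_dvd_right d e)
              exact ⟨⟨lt_of_le_of_lt (Nat.le_of_dvd (Nat.pos_of_ne_zero hds.ne_zero) had) hdR,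
                hds.squarefree_of_dvd had, Nat.Coprime.coprime_dvd_left had hdA, haδ⟩, had, hae⟩
          rw [hfilter]
          exact hsumdiv _
            (hG.squarefree_of_dvd (Nat.div_dvd_of_dvd (Nat.gcd_dvd_left _ _)))
  exact hLHS.trans hRHS.symm
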